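/- Let V < 0 be continuous with −V(x) ≤ C⟨x⟩^{-μ}, 0 < μ < 2. There exists c₀ > 0 (depending only on μ and C) such that for λ ≥ c₀⟨x⟩^{-μ/2}, x ≥ x', |x| ≥ |x'|: (1/4)|x−x'| ≤ ∫_{x'}^x λ(λ²−V(s))^{-1/2} ds ≤ |x−x'| and |∫_{x'}^x V(s)(λ²−V(s))^{-3/2} ds| ≤ |x−x'|/λ. -/

import Mathlib

open Set intervalIntegral

private lemma sq_rpow_neg_half (b : ℝ) (hb : 0 < b) : (b^2 : ℝ) ^ (-(1:ℝ)/2) = b⁻¹ := by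
  rw [← Real.rpow_natCast b 2, ← Real.rpow_mul hb.le]
  norm_num [Real.rpow_neg_one]

/-- High-energy approximation of the eikonal derivative: there is `c₀ > 0` depending only
on `μ` and `C` such that for `λ ≥ c₀⟨x⟩^{-μ/2}`, `x ≥ x'`, `|x| ≥ |x'|`,
`(1/4)|x-x'| ≤ ∫_{x'}^x λ(λ²-V)^{-1/2} ds ≤ |x-x'|` and
`|∫_{x'}^x V (λ²-V)^{-3/2} ds| ≤ |x-x'|/λ`. -/
theorem high_energy_phase_approximation (μ C : ℝ) (hμ : μ ∈ Ioo (0:ℝ) 2) (hC : 0 < C) :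
    ∃ c₀ > (0:ℝ), ∀ V : ℝ → ℝ, Continuous V → (∀ x, V x < 0) →
      (∀ x : ℝ, -V x ≤ C * (1 + x^2) ^ (-(μ/2))) →
      ∀ (l x x' : ℝ), c₀ * (1 + x^2) ^ (-(μ/4)) ≤ l → x' ≤ x → |x'| ≤ |x| →
        ((1/4) * |x - x'| ≤ ∫ s in x'..x, l * (l^2 - V s) ^ (-(1:ℝ)/2)) ∧
        ((∫ s in x'..x, l * (l^2 - V s) ^ (-(1:ℝ)/2)) ≤ |x - x'|) ∧
        (|∫ s in x'..x, V s * (l^2 - V s) ^ (-(3:ℝ)/2)| ≤ |x - x'| / l) := by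
  obtain ⟨hμ0, hμ2⟩ := hμ
  refine ⟨4 * Real.sqrt C, by positivity, ?_⟩
  intro V hVc hVneg hVb l x x' hl hxx' habs
  have hx2 : (0:ℝ) < 1 + x^2 := by positivity
  have hl0 : 0 < l := lt_of_lt_of_le (by positivity) hl
  -- l² ≥ 16 C ⟨x⟩^{-μ}
  have hlsq : 16 * C * (1 + x^2) ^ (-(μ/2)) ≤ l^2 := by
    have h1 : (4 * Real.sqrt C * (1 + x^2) ^ (-(μ/4)))^2 ≤ l^2 := by
      apply pow_le_pow_left₀ (by positivity) hl
    have ht : ((1 + x^2) ^ (-(μ/4)))^2 = (1 + x^2) ^ (-(μ/2)) := by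
      rw [← Real.rpow_natCast ((1 + x^2) ^ (-(μ/4))) 2, ← Real.rpow_mul hx2.le]
      congr 1
      push_cast
      ring
    have heq : (4 * Real.sqrt C * (1 + x^2) ^ (-(μ/4)))^2
        = 16 * C * (1 + x^2) ^ (-(μ/2)) := by
      rw [mul_pow, mul_pow, Real.sq_sqrt hC.le, ht]
      ring
    rw [← heq]
    exact h1
  have hpos : ∀ s, 0 < l^2 - V s := fun s => by
    have := hVneg s; nlinarith
  have hle2 : ∀ s, l^2 ≤ l^2 - V s := fun s => by have := hVneg s; linarith
  -- continuity & integrability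
  have hcontf : Continuous fun s => l * (l^2 - V s) ^ (-(1:ℝ)/2) := by
    apply continuous_const.mul
    exact (continuous_const.sub hVc).rpow_const (fun s => Or.inl (hpos s).ne')
  have hcontg : Continuous fun s => V s * (l^2 - V s) ^ (-(3:ℝ)/2) := by
    apply hVc.mul
    exact (continuous_const.sub hVc).rpow_const (fun s => Or.inl (hpos s).ne')
  -- pointwise upper bound f ≤ 1
  have hf1 : ∀ s : ℝ, l * (l^2 - V s) ^ (-(1:ℝ)/2) ≤ 1 := by
    intro s
    have h := Real.rpow_le_rpow_of_nonpos (by positivity : (0:ℝ) < l^2) (hle2 s)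
      (by norm_num : -(1:ℝ)/2 ≤ 0)
    rw [sq_rpow_neg_half l hl0] at h
    calc l * (l^2 - V s) ^ (-(1:ℝ)/2) ≤ l * l⁻¹ :=
          mul_le_mul_of_nonneg_left h hl0.le
      _ = 1 := mul_inv_cancel₀ hl0.ne'
  -- pointwise f ≥ 0
  have hf0 : ∀ s : ℝ, 0 ≤ l * (l^2 - V s) ^ (-(1:ℝ)/2) :=
    fun s => mul_nonneg hl0.le (Real.rpow_nonneg (hpos s).le _)
  have habsx : x - x' = |x - x'| := (abs_of_nonneg (by linarith)).symm
  -- upper bound for the first integral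
  have hup : (∫ s in x'..x, l * (l^2 - V s) ^ (-(1:ℝ)/2)) ≤ |x - x'| := by
    calc (∫ s in x'..x, l * (l^2 - V s) ^ (-(1:ℝ)/2))
        ≤ ∫ _s in x'..x, (1:ℝ) :=
          integral_mono_on hxx' (hcontf.intervalIntegrable _ _)
            (intervalIntegrable_const) (fun s _ => hf1 s)
      _ = x - x' := by simp
      _ = |x - x'| := habsx
  -- third bound
  have hthird : |∫ s in x'..x, V s * (l^2 - V s) ^ (-(3:ℝ)/2)| ≤ |x - x'| / l := by
    have hptw : ∀ s : ℝ, |V s * (l^2 - V s) ^ (-(3:ℝ)/2)| ≤ 1 / l := by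
      intro s
      have hA := hpos s
      have h1 : |V s * (l^2 - V s) ^ (-(3:ℝ)/2)| = (-V s) * (l^2 - V s) ^ (-(3:ℝ)/2) := by
        rw [abs_mul, abs_of_neg (hVneg s), abs_of_pos (Real.rpow_pos_of_pos hA _)]
      have h2 : (-V s) * (l^2 - V s) ^ (-(3:ℝ)/2)
          ≤ (l^2 - V s) * (l^2 - V s) ^ (-(3:ℝ)/2) := by
        apply mul_le_mul_of_nonneg_right (by nlinarith [sq_nonneg l])
          (Real.rpow_pos_of_pos hA _).le
      have h3 : (l^2 - V s) * (l^2 - V s) ^ (-(3:ℝ)/2) = (l^2 - V s) ^ (-(1:ℝ)/2) := by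
        nth_rewrite 1 [← Real.rpow_one (l^2 - V s)]
        rw [← Real.rpow_add hA]
        norm_num
      have h4 : (l^2 - V s) ^ (-(1:ℝ)/2) ≤ (l^2) ^ (-(1:ℝ)/2) :=
        Real.rpow_le_rpow_of_nonpos (by positivity) (hle2 s) (by norm_num)
      rw [sq_rpow_neg_half l hl0] at h4
      rw [h1, one_div]
      linarith
    calc |∫ s in x'..x, V s * (l^2 - V s) ^ (-(3:ℝ)/2)|
        ≤ ∫ s in x'..x, |V s * (l^2 - V s) ^ (-(3:ℝ)/2)| :=
          abs_integral_le_integral_abs hxx'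
      _ ≤ ∫ _s in x'..x, 1 / l :=
          integral_mono_on hxx' ((hcontg.abs).intervalIntegrable _ _)
            (intervalIntegrable_const) (fun s _ => hptw s)
      _ = (x - x') * (1 / l) := by simp
      _ = |x - x'| / l := by rw [← habsx]; ring
  refine ⟨?_, hup, hthird⟩
  -- lower bound
  rcases le_or_gt 0 x with hx0 | hx0
  · -- main case x ≥ 0
    set a := max x' (x/4) with ha
    have ha1 : x' ≤ a := le_max_left _ _
    have ha2 : a ≤ x := max_le hxx' (by linarith)
    have hax4 : x/4 ≤ a := le_max_right _ _
    -- pointwise lower bound on [a, x]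
    have hptw : ∀ s ∈ Icc a x, (2/3 : ℝ) ≤ l * (l^2 - V s) ^ (-(1:ℝ)/2) := by
      intro s hs
      have hs1 : x/4 ≤ s := le_trans hax4 hs.1
      have hs2 : s ≤ x := hs.2
      have hs0 : 0 ≤ s := by linarith
      -- ⟨s⟩^{-μ} ≤ 16 ⟨x⟩^{-μ}
      have h16 : (1 + x^2)/16 ≤ 1 + s^2 := by nlinarith
      have hq : (0:ℝ) < (1 + x^2)/16 := by positivity
      have hstep1 : (1 + s^2 : ℝ) ^ (-(μ/2)) ≤ ((1 + x^2)/16 : ℝ) ^ (-(μ/2)) :=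
        Real.rpow_le_rpow_of_nonpos hq h16 (by linarith)
      have hstep2 : ((1 + x^2)/16 : ℝ) ^ (-(μ/2)) = (1 + x^2) ^ (-(μ/2)) * 16 ^ (μ/2) := by
        rw [Real.div_rpow hx2.le (by norm_num : (0:ℝ) ≤ 16), div_eq_mul_inv,
          ← Real.rpow_neg (by norm_num : (0:ℝ) ≤ 16), neg_neg]
      have hstep3 : (16:ℝ) ^ (μ/2) ≤ 16 := by
        calc (16:ℝ) ^ (μ/2) ≤ 16 ^ (1:ℝ) :=
              Real.rpow_le_rpow_of_exponent_le (by norm_num) (by linarith)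
          _ = 16 := Real.rpow_one 16
      have hVsmall : -V s ≤ l^2 := by
        calc -V s ≤ C * (1 + s^2) ^ (-(μ/2)) := hVb s
          _ ≤ C * ((1 + x^2) ^ (-(μ/2)) * 16) := by
              apply mul_le_mul_of_nonneg_left _ hC.le
              calc (1 + s^2 : ℝ) ^ (-(μ/2)) ≤ (1 + x^2) ^ (-(μ/2)) * 16 ^ (μ/2) := by
                    rw [← hstep2]; exact hstep1
                _ ≤ (1 + x^2) ^ (-(μ/2)) * 16 :=
                    mul_le_mul_of_nonneg_left hstep3 (Real.rpow_nonneg hx2.le _)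
          _ = 16 * C * (1 + x^2) ^ (-(μ/2)) := by ring
          _ ≤ l^2 := hlsq
      -- l² - V s ≤ (3/2 l)²
      have hB : l^2 - V s ≤ ((3/2) * l)^2 := by nlinarith [sq_nonneg l]
      have h5 : (((3/2 : ℝ) * l)^2) ^ (-(1:ℝ)/2) ≤ (l^2 - V s) ^ (-(1:ℝ)/2) :=
        Real.rpow_le_rpow_of_nonpos (hpos s) hB (by norm_num)
      rw [sq_rpow_neg_half ((3/2) * l) (by positivity)] at h5
      have h6 : l * ((3/2 : ℝ) * l)⁻¹ ≤ l * (l^2 - V s) ^ (-(1:ℝ)/2) :=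
        mul_le_mul_of_nonneg_left h5 hl0.le
      have h7 : l * ((3/2 : ℝ) * l)⁻¹ = 2/3 := by
        field_simp
      linarith
    -- split the integral
    have hint1 : IntervalIntegrable (fun s => l * (l^2 - V s) ^ (-(1:ℝ)/2)) MeasureTheory.volume x' a :=
      hcontf.intervalIntegrable _ _
    have hint2 : IntervalIntegrable (fun s => l * (l^2 - V s) ^ (-(1:ℝ)/2)) MeasureTheory.volume a x :=
      hcontf.intervalIntegrable _ _
    have hsplit : (∫ s in x'..a, l * (l^2 - V s) ^ (-(1:ℝ)/2))
        + (∫ s in a..x, l * (l^2 - V s) ^ (-(1:ℝ)/2))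
        = ∫ s in x'..x, l * (l^2 - V s) ^ (-(1:ℝ)/2) :=
      integral_add_adjacent_intervals hint1 hint2
    have hpart1 : 0 ≤ ∫ s in x'..a, l * (l^2 - V s) ^ (-(1:ℝ)/2) :=
      integral_nonneg ha1 (fun s _ => hf0 s)
    have hpart2 : (x - a) * (2/3) ≤ ∫ s in a..x, l * (l^2 - V s) ^ (-(1:ℝ)/2) := by
      calc (x - a) * (2/3 : ℝ) = ∫ _s in a..x, (2/3 : ℝ) := by
            rw [integral_const, smul_eq_mul]
        _ ≤ ∫ s in a..x, l * (l^2 - V s) ^ (-(1:ℝ)/2) :=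
            integral_mono_on ha2 intervalIntegrable_const hint2 hptw
    have hxlow : -x ≤ x' := by
      have := neg_abs_le x'
      rw [abs_of_nonneg hx0] at habs
      linarith [abs_nonneg x', this, habs]
    have hfinal : (1/4) * (x - x') ≤ (x - a) * (2/3) := by
      rcases le_total x' (x/4) with hc | hc
      · rw [ha, max_eq_right hc]; linarith
      · rw [ha, max_eq_left hc]; linarith
    rw [← habsx]
    linarith
  · -- degenerate case x < 0 forces x' = x
    have hxeq : x' = x := by
      rw [abs_of_neg hx0, abs_of_neg (lt_of_le_of_lt hxx' hx0)] at habs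
      linarith
    subst hxeq
    simp
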